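/- arXiv:0711.3666 — 5 statements merged into one kernel-verified Lean document; each statement's English description precedes it below -/
import Mathlib

section
/- Let $t_0<t_1$, and let $A_1, A_2 : [t_0,t_1]\to\mathbb{R}^{n\times n}$ be continuous matrix functions. Suppose there exists a continuously differentiable symmetric matrix function $K^0(t)$ such that the symmetric matrix $N(t) := (K^0)'(t) - A_2^0(t) - \big(\tfrac12 A_1(t) - K^0(t)\big)\big(\tfrac12 A_1(t)^\top - K^0(t)\big)$ is positive definite for all $t\in[t_0,t_1]$, where $A_2^0 = \tfrac12(A_2 + A_2^\top)$. Then the only $C^2$ solution $x:[t_0,t_1]\to\mathbb{R}^n$ of $x'' + A_1(t)x' + A_2(t)x = 0$ with $x(t_0)=x(t_1)=0$ is $x\equiv 0$. -/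
open Matrix

private lemma dot_self_nonneg' {n : ℕ} (v : Fin n → ℝ) : 0 ≤ v ⬝ᵥ v :=
  Finset.sum_nonneg fun i _ => mul_self_nonneg _

private lemma hasDerivAt_dot' {n : ℕ} {u v : ℝ → Fin n → ℝ} {u' v' : Fin n → ℝ} {t : ℝ}
    (hu : HasDerivAt u u' t) (hv : HasDerivAt v v' t) :
    HasDerivAt (fun s => u s ⬝ᵥ v s) (u' ⬝ᵥ v t + u t ⬝ᵥ v') t := by
  simp only [dotProduct]
  rw [← Finset.sum_add_distrib]
  exact HasDerivAt.fun_sum fun i _ => ((hasDerivAt_pi.mp hu i).mul (hasDerivAt_pi.mp hv i))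

private lemma hasDerivAt_mulVec' {n : ℕ} {K : ℝ → Matrix (Fin n) (Fin n) ℝ}
    {Kd : Matrix (Fin n) (Fin n) ℝ} {v : ℝ → Fin n → ℝ} {v' : Fin n → ℝ} {t : ℝ}
    (hK : ∀ i j, HasDerivAt (fun s => K s i j) (Kd i j) t) (hv : HasDerivAt v v' t) :
    HasDerivAt (fun s => K s *ᵥ v s) (Kd *ᵥ v t + K t *ᵥ v') t := by
  rw [hasDerivAt_pi]
  intro i
  simp only [Matrix.mulVec, dotProduct, Pi.add_apply]
  rw [← Finset.sum_add_distrib]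
  exact HasDerivAt.fun_sum fun j _ => ((hK i j).mul (hasDerivAt_pi.mp hv j))

private lemma key_alg' {n : ℕ} (A1 A2 K0 K0' : Matrix (Fin n) (Fin n) ℝ) (hK : K0ᵀ = K0)
    (a b : Fin n → ℝ) :
    b ⬝ᵥ b + a ⬝ᵥ (-(A1 *ᵥ b) - A2 *ᵥ a) + (b ⬝ᵥ (K0 *ᵥ a) + a ⬝ᵥ (K0' *ᵥ a + K0 *ᵥ b))
      = (b - ((1/2:ℝ) • A1ᵀ - K0) *ᵥ a) ⬝ᵥ (b - ((1/2:ℝ) • A1ᵀ - K0) *ᵥ a)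
        + a ⬝ᵥ ((K0' - (1/2:ℝ) • (A2 + A2ᵀ) - ((1/2:ℝ) • A1 - K0) * ((1/2:ℝ) • A1ᵀ - K0)) *ᵥ a) := by
  have hL : ∀ (M : Matrix (Fin n) (Fin n) ℝ) (u v : Fin n → ℝ), (M *ᵥ u) ⬝ᵥ v = u ⬝ᵥ (Mᵀ *ᵥ v) := by
    intro M u v; rw [dotProduct_mulVec, vecMul_transpose]
  have hab : ∀ (M : Matrix (Fin n) (Fin n) ℝ), a ⬝ᵥ (M *ᵥ b) = b ⬝ᵥ (Mᵀ *ᵥ a) := by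
    intro M; rw [dotProduct_comm, hL]
  have hA2' : a ⬝ᵥ (A2ᵀ *ᵥ a) = a ⬝ᵥ (A2 *ᵥ a) := by rw [← hL, dotProduct_comm]
  simp only [Matrix.sub_mulVec, Matrix.add_mulVec, Matrix.smul_mulVec, Matrix.mulVec_sub,
    Matrix.mulVec_smul, dotProduct_sub, sub_dotProduct, dotProduct_add, add_dotProduct,
    dotProduct_neg, neg_dotProduct, dotProduct_smul, smul_dotProduct, smul_eq_mul,
    Matrix.mulVec_mulVec, hL, hab, Matrix.transpose_transpose, Matrix.transpose_mul,
    Matrix.transpose_smul, Matrix.transpose_sub, Matrix.transpose_add, hK,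
    Matrix.mul_sub, Matrix.sub_mul, Matrix.mul_smul, Matrix.smul_mul, hA2']
  ring


/-- Hartman–Wintner criterion: if there is a `C¹` symmetric matrix `K⁰(t)` such that
`N := (K⁰)' - ½(A₂+A₂ᵀ) - (½A₁-K⁰)(½A₁ᵀ-K⁰)` is positive definite on `[t₀,t₁]`, then the
only `C²` solution of `x'' + A₁x' + A₂x = 0` with `x(t₀)=x(t₁)=0` is `x ≡ 0`. -/
theorem stmt_2 (n : ℕ) (t0 t1 : ℝ) (ht : t0 < t1)
    (A1 A2 : ℝ → Matrix (Fin n) (Fin n) ℝ)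
    (hA1 : ∀ i j, ContinuousOn (fun t => A1 t i j) (Set.Icc t0 t1))
    (hA2 : ∀ i j, ContinuousOn (fun t => A2 t i j) (Set.Icc t0 t1))
    (K0 K0' : ℝ → Matrix (Fin n) (Fin n) ℝ)
    (hK0sym : ∀ t ∈ Set.Icc t0 t1, (K0 t)ᵀ = K0 t)
    (hK0deriv : ∀ t ∈ Set.Icc t0 t1, ∀ i j, HasDerivAt (fun s => K0 s i j) (K0' t i j) t)
    (hK0cont : ∀ i j, ContinuousOn (fun t => K0' t i j) (Set.Icc t0 t1))
    (hN : ∀ t ∈ Set.Icc t0 t1, ∀ ξ : Fin n → ℝ, ξ ≠ 0 →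
      0 < ξ ⬝ᵥ ((K0' t - (1 / 2 : ℝ) • (A2 t + (A2 t)ᵀ)
        - ((1 / 2 : ℝ) • A1 t - K0 t) * ((1 / 2 : ℝ) • (A1 t)ᵀ - K0 t)) *ᵥ ξ))
    (x : ℝ → (Fin n → ℝ))
    (hx : ContDiffOn ℝ 2 x (Set.Icc t0 t1))
    (hode : ∀ t ∈ Set.Icc t0 t1,
      deriv (deriv x) t + A1 t *ᵥ deriv x t + A2 t *ᵥ x t = 0)
    (hbc0 : x t0 = 0) (hbc1 : x t1 = 0) :
    ∀ t ∈ Set.Icc t0 t1, x t = 0 := by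
  set s : Set ℝ := Set.Icc t0 t1 with hs_def
  have hsu : UniqueDiffOn ℝ s := uniqueDiffOn_Icc ht
  set x' : ℝ → Fin n → ℝ := derivWithin x s with hx'_def
  have hxc : ContinuousOn x s := hx.continuousOn
  have hx1 : DifferentiableOn ℝ x s := hx.differentiableOn two_ne_zero
  have hx'cd : ContDiffOn ℝ 1 x' s := hx.derivWithin hsu (by norm_num)
  have hx'c : ContinuousOn x' s := hx'cd.continuousOn
  have hx'd : DifferentiableOn ℝ x' s := hx'cd.differentiableOn one_ne_zero
  set g : ℝ → ℝ := fun t => x t ⬝ᵥ x' t + x t ⬝ᵥ (K0 t *ᵥ x t) with hg_def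
  set G : ℝ → ℝ := fun t => x' t ⬝ᵥ x' t + x t ⬝ᵥ (-(A1 t *ᵥ x' t) - A2 t *ᵥ x t)
      + (x' t ⬝ᵥ (K0 t *ᵥ x t) + x t ⬝ᵥ (K0' t *ᵥ x t + K0 t *ᵥ x' t)) with hG_def
  -- derivative of g at interior points
  have hgd : ∀ t ∈ Set.Ioo t0 t1, HasDerivAt g (G t) t := by
    intro t htI
    have hts : t ∈ s := Set.Ioo_subset_Icc_self htI
    have hnb : s ∈ nhds t := Icc_mem_nhds htI.1 htI.2
    have hxt : x' t = deriv x t := derivWithin_of_mem_nhds hnb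
    have hdx : HasDerivAt x (x' t) t := by
      rw [hxt]; exact ((hx1 t hts).differentiableAt hnb).hasDerivAt
    have hdx' : HasDerivAt x' (deriv x' t) t :=
      ((hx'd t hts).differentiableAt hnb).hasDerivAt
    have heq : x' =ᶠ[nhds t] deriv x := by
      filter_upwards [Ioo_mem_nhds htI.1 htI.2] with u hu
      exact derivWithin_of_mem_nhds (Icc_mem_nhds hu.1 hu.2)
    have hc : deriv x' t = -(A1 t *ᵥ x' t) - A2 t *ᵥ x t := by
      have h2 := hode t hts
      rw [← hxt, ← heq.deriv_eq] at h2
      have h4 : deriv x' t + (A1 t *ᵥ x' t + A2 t *ᵥ x t) = 0 := by rw [← add_assoc]; exact h2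
      rw [eq_neg_of_add_eq_zero_left h4, neg_add]
      abel
    have hdK : HasDerivAt (fun u => K0 u *ᵥ x u) (K0' t *ᵥ x t + K0 t *ᵥ x' t) t :=
      hasDerivAt_mulVec' (fun i j => hK0deriv t hts i j) hdx
    have h1 : HasDerivAt (fun u => x u ⬝ᵥ x' u) (x' t ⬝ᵥ x' t + x t ⬝ᵥ deriv x' t) t :=
      hasDerivAt_dot' hdx hdx'
    have h2 : HasDerivAt (fun u => x u ⬝ᵥ (K0 u *ᵥ x u))
        (x' t ⬝ᵥ (K0 t *ᵥ x t) + x t ⬝ᵥ (K0' t *ᵥ x t + K0 t *ᵥ x' t)) t :=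
      hasDerivAt_dot' hdx hdK
    have := h1.add h2
    rw [hc] at this
    exact this
  -- G equals sum of two nonneg terms
  have hGeq : ∀ t ∈ Set.Icc t0 t1, G t
      = (x' t - ((1/2:ℝ) • (A1 t)ᵀ - K0 t) *ᵥ x t) ⬝ᵥ (x' t - ((1/2:ℝ) • (A1 t)ᵀ - K0 t) *ᵥ x t)
        + x t ⬝ᵥ ((K0' t - (1/2:ℝ) • (A2 t + (A2 t)ᵀ)
          - ((1/2:ℝ) • A1 t - K0 t) * ((1/2:ℝ) • (A1 t)ᵀ - K0 t)) *ᵥ x t) := by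
    intro t hts
    exact key_alg' (A1 t) (A2 t) (K0 t) (K0' t) (hK0sym t hts) (x t) (x' t)
  have hGnn : ∀ t ∈ Set.Icc t0 t1, 0 ≤ G t := by
    intro t hts
    rw [hGeq t hts]
    have h1 := dot_self_nonneg' (x' t - ((1/2:ℝ) • (A1 t)ᵀ - K0 t) *ᵥ x t)
    rcases eq_or_ne (x t) 0 with h | h
    · simp only [h, Matrix.mulVec_zero, sub_zero, zero_dotProduct, add_zero]
      exact dot_self_nonneg' _
    · have := hN t hts (x t) h
      linarith
  -- continuity of g
  have hK0c : ∀ i j, ContinuousOn (fun u => K0 u i j) s := fun i j t hts =>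
    (hK0deriv t hts i j).continuousAt.continuousWithinAt
  have hdotc : ∀ (u v : ℝ → Fin n → ℝ), ContinuousOn u s → ContinuousOn v s →
      ContinuousOn (fun t => u t ⬝ᵥ v t) s := by
    intro u v hu hv
    simp only [dotProduct]
    exact continuousOn_finset_sum _ fun i _ =>
      ((continuousOn_pi.mp hu i).mul (continuousOn_pi.mp hv i))
  have hKxc : ContinuousOn (fun t => K0 t *ᵥ x t) s := by
    rw [continuousOn_pi]
    intro i
    simp only [Matrix.mulVec, dotProduct]
    exact continuousOn_finset_sum _ fun j _ => ((hK0c i j).mul (continuousOn_pi.mp hxc j))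
  have hgc : ContinuousOn g s := (hdotc _ _ hxc hx'c).add (hdotc _ _ hxc hKxc)
  -- monotonicity
  have hmono : MonotoneOn g s := by
    apply monotoneOn_of_deriv_nonneg (convex_Icc t0 t1) hgc
    · intro t htI
      rw [interior_Icc] at htI
      exact (hgd t htI).differentiableAt.differentiableWithinAt
    · intro t htI
      rw [interior_Icc] at htI
      rw [(hgd t htI).deriv]
      exact hGnn t (Set.Ioo_subset_Icc_self htI)
  have hgt0 : g t0 = 0 := by simp [hg_def, hbc0]
  have hgt1 : g t1 = 0 := by simp [hg_def, hbc1]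
  have hgzero : ∀ t ∈ s, g t = 0 := by
    intro t hts
    have h1 := hmono (Set.left_mem_Icc.mpr ht.le) hts hts.1
    have h2 := hmono hts (Set.right_mem_Icc.mpr ht.le) hts.2
    rw [hgt0] at h1; rw [hgt1] at h2
    linarith
  -- interior vanishing
  have hint : ∀ t ∈ Set.Ioo t0 t1, x t = 0 := by
    intro t htI
    have hts : t ∈ s := Set.Ioo_subset_Icc_self htI
    have hev : g =ᶠ[nhds t] fun _ => (0:ℝ) := by
      filter_upwards [Ioo_mem_nhds htI.1 htI.2] with u hu
      exact hgzero u (Set.Ioo_subset_Icc_self hu)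
    have h0 : HasDerivAt g 0 t := hev.hasDerivAt_iff.mpr (hasDerivAt_const t 0)
    have hG0 : G t = 0 := (hgd t htI).unique h0
    by_contra hne
    have hpos := hN t hts (x t) hne
    have h1 := dot_self_nonneg' (x' t - ((1/2:ℝ) • (A1 t)ᵀ - K0 t) *ᵥ x t)
    have := hGeq t hts
    rw [hG0] at this
    linarith
  intro t hts
  rcases eq_or_lt_of_le hts.1 with h | h
  · rw [← h]; exact hbc0
  rcases eq_or_lt_of_le hts.2 with h' | h'
  · rw [h']; exact hbc1
  exact hint t ⟨h, h'⟩
end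

section
/- Let $t_0<t_1$, $A_1,A_2:[t_0,t_1]\to\mathbb{R}^{n\times n}$ continuous, and let $x:[t_0,t_1]\to\mathbb{R}^n$ be a $C^2$ solution of $x''+A_1(t)x'+A_2(t)x=0$ with $x(t_0)=x(t_1)=0$. Then for any $C^1$ symmetric matrix function $K^0(t)$, $\int_{t_0}^{t_1}\Big(\big|x'-\big(\tfrac12 A_1^\top - K^0\big)x\big|^2 + x\cdot N x\Big)\,dt = 0$, where $N := (K^0)' - \tfrac12(A_2+A_2^\top) - \big(\tfrac12 A_1 - K^0\big)\big(\tfrac12 A_1^\top - K^0\big)$. -/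
open Matrix

lemma hw_alg {n : ℕ} (A1 A2 K0 K0' : Matrix (Fin n) (Fin n) ℝ) (hK : K0ᵀ = K0)
    (x y z : Fin n → ℝ) (hz : z + A1 *ᵥ y + A2 *ᵥ x = 0) :
    ((∑ i, (y i * y i + x i * z i))
      + ∑ i, (y i * (K0 *ᵥ x) i + x i * ((K0' *ᵥ x) i + (K0 *ᵥ y) i)))
    = ((∑ i, (y i - (((1/2:ℝ) • A1ᵀ - K0) *ᵥ x) i)^2)
      + x ⬝ᵥ ((K0' - (1/2:ℝ) • (A2 + A2ᵀ) - ((1/2:ℝ) • A1 - K0) * ((1/2:ℝ) • A1ᵀ - K0)) *ᵥ x)) := by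
  have hz' : z = -(A1 *ᵥ y) - A2 *ᵥ x := by
    have := hz; linear_combination (norm := module) this
  set B : Matrix (Fin n) (Fin n) ℝ := (1/2:ℝ) • A1ᵀ - K0 with hB
  have hBt : ((1/2:ℝ) • A1 - K0)ᵀ = B := by
    simp [hB, transpose_smul, hK]
  have h1 : (∑ i, (y i * y i + x i * z i)) = y ⬝ᵥ y + x ⬝ᵥ z := by
    simp [dotProduct, Finset.sum_add_distrib]
  have h2 : (∑ i, (y i * (K0 *ᵥ x) i + x i * ((K0' *ᵥ x) i + (K0 *ᵥ y) i)))
      = y ⬝ᵥ (K0 *ᵥ x) + (x ⬝ᵥ (K0' *ᵥ x) + x ⬝ᵥ (K0 *ᵥ y)) := by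
    simp [dotProduct, Finset.sum_add_distrib, mul_add]
  have h3 : (∑ i, (y i - (B *ᵥ x) i)^2) = (y - B *ᵥ x) ⬝ᵥ (y - B *ᵥ x) := by
    simp [dotProduct, sq]
  rw [h1, h2, h3]
  have hsym : x ⬝ᵥ (K0 *ᵥ y) = y ⬝ᵥ (K0 *ᵥ x) := by
    rw [dotProduct_mulVec, ← mulVec_transpose, hK, dotProduct_comm]
  have hA1s : x ⬝ᵥ (A1 *ᵥ y) = y ⬝ᵥ (A1ᵀ *ᵥ x) := by
    rw [dotProduct_mulVec, ← mulVec_transpose, dotProduct_comm]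
  have hA2s : x ⬝ᵥ (A2ᵀ *ᵥ x) = x ⬝ᵥ (A2 *ᵥ x) := by
    rw [dotProduct_mulVec, vecMul_transpose, dotProduct_comm]
  have hBB : x ⬝ᵥ ((((1/2:ℝ) • A1 - K0) * B) *ᵥ x) = (B *ᵥ x) ⬝ᵥ (B *ᵥ x) := by
    rw [← mulVec_mulVec, dotProduct_mulVec, ← mulVec_transpose, hBt, dotProduct_comm]
  rw [hz']
  simp only [sub_mulVec, add_mulVec, smul_mulVec, dotProduct_sub, dotProduct_add,
    sub_dotProduct, add_dotProduct, dotProduct_smul, smul_dotProduct, dotProduct_neg,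
    smul_eq_mul, hBB]
  rw [hsym, hA1s]
  have hA2s' : x ⬝ᵥ ((1/2:ℝ) • (A2ᵀ *ᵥ x)) = (1/2:ℝ) * (x ⬝ᵥ (A2 *ᵥ x)) := by
    rw [dotProduct_smul, hA2s]; simp
  have hBx : y ⬝ᵥ (B *ᵥ x) = (1/2:ℝ) * (y ⬝ᵥ (A1ᵀ *ᵥ x)) - y ⬝ᵥ (K0 *ᵥ x) := by
    rw [hB, sub_mulVec, smul_mulVec, dotProduct_sub, dotProduct_smul]; simp
  ring_nf
  rw [dotProduct_comm (B *ᵥ x) y, hBx, hA2s]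
  ring

/-- Key integral identity in the Hartman–Wintner uniqueness argument: if `x` is a `C²`
solution of `x'' + A₁x' + A₂x = 0` with `x(t₀)=x(t₁)=0`, then for any `C¹` symmetric `K⁰`,
`∫ (|x' - (½A₁ᵀ - K⁰)x|² + x·Nx) dt = 0` where
`N = (K⁰)' - ½(A₂+A₂ᵀ) - (½A₁-K⁰)(½A₁ᵀ-K⁰)`. -/
theorem stmt_3 (n : ℕ) (t0 t1 : ℝ) (ht : t0 < t1)
    (A1 A2 : ℝ → Matrix (Fin n) (Fin n) ℝ)
    (hA1 : ∀ i j, ContinuousOn (fun t => A1 t i j) (Set.Icc t0 t1))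
    (hA2 : ∀ i j, ContinuousOn (fun t => A2 t i j) (Set.Icc t0 t1))
    (x : ℝ → (Fin n → ℝ))
    (hx : ContDiffOn ℝ 2 x (Set.Icc t0 t1))
    (hode : ∀ t ∈ Set.Icc t0 t1,
      deriv (deriv x) t + A1 t *ᵥ deriv x t + A2 t *ᵥ x t = 0)
    (hbc0 : x t0 = 0) (hbc1 : x t1 = 0)
    (K0 K0' : ℝ → Matrix (Fin n) (Fin n) ℝ)
    (hK0sym : ∀ t ∈ Set.Icc t0 t1, (K0 t)ᵀ = K0 t)
    (hK0deriv : ∀ t ∈ Set.Icc t0 t1, ∀ i j, HasDerivAt (fun s => K0 s i j) (K0' t i j) t)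
    (hK0cont : ∀ i j, ContinuousOn (fun t => K0' t i j) (Set.Icc t0 t1)) :
    ∫ t in t0..t1,
      ((∑ i : Fin n, (deriv x t i - (((1 / 2 : ℝ) • (A1 t)ᵀ - K0 t) *ᵥ x t) i) ^ 2)
        + x t ⬝ᵥ ((K0' t - (1 / 2 : ℝ) • (A2 t + (A2 t)ᵀ)
            - ((1 / 2 : ℝ) • A1 t - K0 t) * ((1 / 2 : ℝ) • (A1 t)ᵀ - K0 t)) *ᵥ x t)) = 0 := by
  have ht' : t0 ≤ t1 := ht.le
  set I : Set ℝ := Set.Icc t0 t1 with hIdef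
  have hU : UniqueDiffOn ℝ I := uniqueDiffOn_Icc ht
  set y : ℝ → Fin n → ℝ := fun t => derivWithin x I t with hy
  have hxd : DifferentiableOn ℝ x I := hx.differentiableOn two_ne_zero
  have hxc : ContinuousOn x I := hxd.continuousOn
  have hyc : ContinuousOn y I := hx.continuousOn_derivWithin hU one_le_two
  have hK0c : ∀ i j, ContinuousOn (fun t => K0 t i j) I := fun i j t htI =>
    ((hK0deriv t htI i j).continuousAt).continuousWithinAt
  have hxci : ∀ i, ContinuousOn (fun t => x t i) I := fun i =>
    (continuous_apply i).comp_continuousOn hxc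
  have hyci : ∀ i, ContinuousOn (fun t => y t i) I := fun i =>
    (continuous_apply i).comp_continuousOn hyc
  -- the N matrix entries are continuous
  set N : ℝ → Matrix (Fin n) (Fin n) ℝ := fun t =>
    K0' t - (1 / 2 : ℝ) • (A2 t + (A2 t)ᵀ)
      - ((1 / 2 : ℝ) • A1 t - K0 t) * ((1 / 2 : ℝ) • (A1 t)ᵀ - K0 t) with hNdef
  have hNc : ∀ i j, ContinuousOn (fun t => N t i j) I := by
    intro i j
    simp only [hNdef, Matrix.sub_apply, Matrix.add_apply, Matrix.smul_apply,
      Matrix.transpose_apply, Matrix.mul_apply, smul_eq_mul]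
    apply ContinuousOn.sub
    · exact (hK0cont i j).sub (continuousOn_const.mul ((hA2 i j).add (hA2 j i)))
    · exact continuousOn_finset_sum _ fun k _ =>
        ((continuousOn_const.mul (hA1 i k)).sub (hK0c i k)).mul
          ((continuousOn_const.mul (hA1 j k)).sub (hK0c k j))
  set B : ℝ → Matrix (Fin n) (Fin n) ℝ := fun t => (1 / 2 : ℝ) • (A1 t)ᵀ - K0 t with hBdef
  have hBc : ∀ i j, ContinuousOn (fun t => B t i j) I := by
    intro i j
    simp only [hBdef, Matrix.sub_apply, Matrix.smul_apply, Matrix.transpose_apply, smul_eq_mul]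
    exact (continuousOn_const.mul (hA1 j i)).sub (hK0c i j)
  -- the modified integrand, using the within-derivative
  set g : ℝ → ℝ := fun t =>
      ((∑ i : Fin n, (y t i - (B t *ᵥ x t) i) ^ 2) + x t ⬝ᵥ (N t *ᵥ x t)) with hg
  have hgc : ContinuousOn g I := by
    apply ContinuousOn.add
    · apply continuousOn_finset_sum _ fun i _ => ?_
      have hBx : ContinuousOn (fun t => (B t *ᵥ x t) i) I := by
        simp only [mulVec, dotProduct]
        exact continuousOn_finset_sum _ fun j _ => (hBc i j).mul (hxci j)
      exact ((hyci i).sub hBx).pow 2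
    · simp only [dotProduct, mulVec]
      exact continuousOn_finset_sum _ fun i _ => (hxci i).mul
        (continuousOn_finset_sum _ fun j _ => (hNc i j).mul (hxci j))
  -- the primitive
  set G : ℝ → ℝ := fun t => x t ⬝ᵥ y t + x t ⬝ᵥ (K0 t *ᵥ x t) with hG
  have hGc : ContinuousOn G I := by
    apply ContinuousOn.add
    · simp only [dotProduct]
      exact continuousOn_finset_sum _ fun i _ => (hxci i).mul (hyci i)
    · simp only [dotProduct, mulVec]
      exact continuousOn_finset_sum _ fun i _ => (hxci i).mul
        (continuousOn_finset_sum _ fun j _ => (hK0c i j).mul (hxci j))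
  -- derivative of G on the interior
  have hderiv : ∀ t ∈ Set.Ioo t0 t1, HasDerivAt G (g t) t := by
    intro t htO
    have htI : t ∈ I := Set.Ioo_subset_Icc_self htO
    have hmem : I ∈ nhds t := Icc_mem_nhds htO.1 htO.2
    have hyt : y t = deriv x t := derivWithin_of_mem_nhds hmem
    have hX : HasDerivAt x (y t) t := by
      rw [hyt]; exact (hxd.differentiableAt hmem).hasDerivAt
    set z : Fin n → ℝ := deriv (deriv x) t with hzdef
    have hIoo : ContDiffOn ℝ 2 x (Set.Ioo t0 t1) := hx.mono Set.Ioo_subset_Icc_self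
    have hd2 : DifferentiableOn ℝ (deriv x) (Set.Ioo t0 t1) :=
      (hIoo.deriv_of_isOpen (m := 1) isOpen_Ioo (by norm_num)).differentiableOn one_ne_zero
    have hX2 : HasDerivAt (deriv x) z t :=
      (hd2.differentiableAt (Ioo_mem_nhds htO.1 htO.2)).hasDerivAt
    have hyeq : y =ᶠ[nhds t] deriv x :=
      Filter.eventuallyEq_of_mem (Ioo_mem_nhds htO.1 htO.2)
        (fun s hs => derivWithin_of_mem_nhds (Icc_mem_nhds hs.1 hs.2))
    have hY : HasDerivAt y z t := hX2.congr_of_eventuallyEq hyeq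
    have hz0 : z + A1 t *ᵥ y t + A2 t *ᵥ x t = 0 := by
      rw [hyt]; exact hode t htI
    have hXi : ∀ i, HasDerivAt (fun s => x s i) (y t i) t := fun i => hasDerivAt_pi.mp hX i
    have hYi : ∀ i, HasDerivAt (fun s => y s i) (z i) t := fun i => hasDerivAt_pi.mp hY i
    have hD1 : HasDerivAt (fun s => x s ⬝ᵥ y s) (∑ i, (y t i * y t i + x t i * z i)) t := by
      simp only [dotProduct]
      exact HasDerivAt.fun_sum fun i _ => (hXi i).mul (hYi i)
    have hD2 : HasDerivAt (fun s => x s ⬝ᵥ (K0 s *ᵥ x s))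
        (∑ i, (y t i * (K0 t *ᵥ x t) i + x t i * ((K0' t *ᵥ x t) i + (K0 t *ᵥ y t) i))) t := by
      simp only [dotProduct, mulVec]
      apply HasDerivAt.fun_sum
      intro i _
      have hinner : HasDerivAt (fun s => ∑ j, K0 s i j * x s j)
          (∑ j, (K0' t i j * x t j + K0 t i j * y t j)) t :=
        HasDerivAt.fun_sum fun j _ => (hK0deriv t htI i j).mul (hXi j)
      have := (hXi i).fun_mul hinner
      convert this using 1
      · rfl
      simp [dotProduct, Finset.sum_add_distrib]
    have hsum := hD1.add hD2
    have halg := hw_alg (A1 t) (A2 t) (K0 t) (K0' t) (hK0sym t htI) (x t) (y t) z hz0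
    rw [hg]
    simp only [hBdef, hNdef]
    rw [← halg]
    exact hsum
  -- FTC
  have hgint : IntervalIntegrable g MeasureTheory.volume t0 t1 := by
    apply ContinuousOn.intervalIntegrable
    rwa [Set.uIcc_of_le ht']
  have hftc : ∫ t in t0..t1, g t = G t1 - G t0 :=
    intervalIntegral.integral_eq_sub_of_hasDeriv_right_of_le ht' hGc
      (fun t htO => (hderiv t htO).hasDerivWithinAt) hgint
  have hG0 : G t0 = 0 := by simp [hG, hbc0]
  have hG1 : G t1 = 0 := by simp [hG, hbc1]
  -- replace the integrand a.e.
  have hae : ∀ᵐ t ∂(MeasureTheory.volume : MeasureTheory.Measure ℝ),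
      t ∈ Set.uIoc t0 t1 →
      ((∑ i : Fin n, (deriv x t i - (((1 / 2 : ℝ) • (A1 t)ᵀ - K0 t) *ᵥ x t) i) ^ 2)
        + x t ⬝ᵥ ((K0' t - (1 / 2 : ℝ) • (A2 t + (A2 t)ᵀ)
            - ((1 / 2 : ℝ) • A1 t - K0 t) * ((1 / 2 : ℝ) • (A1 t)ᵀ - K0 t)) *ᵥ x t)) = g t := by
    have h1 : ∀ᵐ t ∂(MeasureTheory.volume : MeasureTheory.Measure ℝ), t ≠ t1 := by
      have : (MeasureTheory.volume : MeasureTheory.Measure ℝ) {t1} = 0 :=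
        MeasureTheory.measure_singleton t1
      exact MeasureTheory.compl_mem_ae_iff.mpr this
    filter_upwards [h1] with t hne hmem
    rw [Set.uIoc_of_le ht'] at hmem
    have htO : t ∈ Set.Ioo t0 t1 := ⟨hmem.1, lt_of_le_of_ne hmem.2 hne⟩
    have hyt : y t = deriv x t :=
      derivWithin_of_mem_nhds (Icc_mem_nhds htO.1 htO.2)
    simp only [hg, hBdef, hNdef, hyt]
  rw [intervalIntegral.integral_congr_ae hae, hftc, hG0, hG1, sub_zero]
end

section
/- Let $0<\omega_0<\omega_1<\pi/2$ and let $\mu\in\mathbb{R}$, $\lambda = \mu - i$. Then any $C^2$ function $y:[\omega_0,\omega_1]\to\mathbb{C}$ satisfying $y'' + \cot\theta\, y' + (-\csc^2\theta - \lambda^2 + i\lambda)y = 0$ with $y(\omega_0)=y(\omega_1)=0$ must be identically zero. -/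
open Set Complex in
private lemma key_alg (S C M Y D1 D2 Yc D1c : ℂ) (hS : S ≠ 0) (hpy : S ^ 2 + C ^ 2 = 1)
    (hode : D2 + C / S * D1 + (-(1 / S) ^ 2 - (M - I) ^ 2 + I * (M - I)) * Y = 0) :
    S * (D2 + Y) * Yc + (S * D1 - C * Y) * D1c
      = S * ((D1 - C / S * Y) * (D1c - C / S * Yc))
        + (M ^ 2 - 3 * I * M) * (S * (Y * Yc)) := by
  field_simp at hode ⊢
  linear_combination Yc * hode - S * Y * Yc * hpy + 2 * S ^ 3 * Y * Yc * Complex.I_sq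
    + 2 * Y * Yc * S ^ 2 * (1 - S) * Complex.I_sq - Y * Yc * (1 - S) * hpy

private lemma re_helper (s nZ nY m : ℝ) :
    ((s : ℂ) * (nZ : ℂ) + ((m : ℂ) ^ 2 - 3 * Complex.I * (m : ℂ)) * ((s : ℂ) * (nY : ℂ))).re
      = s * (nZ + m ^ 2 * nY) := by
  simp only [pow_two, Complex.add_re, Complex.mul_re, Complex.mul_im, Complex.sub_re,
    Complex.sub_im, Complex.ofReal_re, Complex.ofReal_im, Complex.I_re, Complex.I_im,
    Complex.re_ofNat, Complex.im_ofNat]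
  ring

/-- Uniqueness for the Fourier-transformed singular ODE with complex spectral parameter
`λ = μ - i`: any `C²` solution of `y'' + cot θ · y' + (-csc²θ - λ² + iλ)y = 0` on
`[ω₀,ω₁] ⊂ (0, π/2)` vanishing at both endpoints is identically zero. -/
theorem stmt_5 (ω0 ω1 μ : ℝ) (h0 : 0 < ω0) (h01 : ω0 < ω1) (h1 : ω1 < Real.pi / 2)
    (y : ℝ → ℂ) (hy : ContDiffOn ℝ 2 y (Set.Icc ω0 ω1))
    (hode : ∀ θ ∈ Set.Icc ω0 ω1,
      deriv (deriv y) θ + ((Real.cos θ / Real.sin θ : ℝ) : ℂ) * deriv y θ +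
        (((-(1 / Real.sin θ) ^ 2 : ℝ) : ℂ) - ((μ : ℂ) - Complex.I) ^ 2
          + Complex.I * ((μ : ℂ) - Complex.I)) * y θ = 0)
    (hbc0 : y ω0 = 0) (hbc1 : y ω1 = 0) :
    ∀ θ ∈ Set.Icc ω0 ω1, y θ = 0 := by
  have hpi : ω1 < Real.pi := by linarith [Real.pi_pos]
  have hsin : ∀ θ ∈ Set.Icc ω0 ω1, 0 < Real.sin θ := fun θ hθ =>
    Real.sin_pos_of_pos_of_lt_pi (lt_of_lt_of_le h0 hθ.1) (lt_of_le_of_lt hθ.2 hpi)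
  have hUsub : Set.Ioo ω0 ω1 ⊆ Set.Icc ω0 ω1 := Set.Ioo_subset_Icc_self
  set y₁ : ℝ → ℂ := derivWithin y (Set.Icc ω0 ω1) with hy₁def
  have hy₁cont : ContinuousOn y₁ (Set.Icc ω0 ω1) :=
    hy.continuousOn_derivWithin (uniqueDiffOn_Icc h01) one_le_two
  have hy₁eq : ∀ θ ∈ Set.Ioo ω0 ω1, y₁ θ = deriv y θ := fun θ hθ =>
    derivWithin_of_mem_nhds (Icc_mem_nhds hθ.1 hθ.2)
  have hyU : ContDiffOn ℝ 2 y (Set.Ioo ω0 ω1) := hy.mono hUsub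
  have hdyU : ContDiffOn ℝ 1 (deriv y) (Set.Ioo ω0 ω1) :=
    hyU.deriv_of_isOpen isOpen_Ioo (by norm_num)
  have hDy : ∀ θ ∈ Set.Ioo ω0 ω1, HasDerivAt y (deriv y θ) θ := fun θ hθ =>
    ((hyU.contDiffAt (isOpen_Ioo.mem_nhds hθ)).differentiableAt two_ne_zero).hasDerivAt
  have hDDy : ∀ θ ∈ Set.Ioo ω0 ω1, HasDerivAt (deriv y) (deriv (deriv y) θ) θ := fun θ hθ =>
    ((hdyU.contDiffAt (isOpen_Ioo.mem_nhds hθ)).differentiableAt one_ne_zero).hasDerivAt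
  set F : ℝ → ℂ := fun t =>
    ((Real.sin t : ℂ) * y₁ t - (Real.cos t : ℂ) * y t) * (starRingEnd ℂ) (y t) with hFdef
  set f : ℝ → ℝ := fun t => (F t).re with hfdef
  set G : ℝ → ℝ := fun t => Real.sin t *
    (Complex.normSq (deriv y t - ((Real.cos t / Real.sin t : ℝ) : ℂ) * y t)
      + μ ^ 2 * Complex.normSq (y t)) with hGdef
  -- main derivative computation
  have hF' : ∀ θ ∈ Set.Ioo ω0 ω1, HasDerivAt f (G θ) θ := by
    intro θ hθ
    have hsθ : 0 < Real.sin θ := hsin θ (hUsub hθ)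
    have hSne : ((Real.sin θ : ℝ) : ℂ) ≠ 0 := Complex.ofReal_ne_zero.2 hsθ.ne'
    have hsinC : HasDerivAt (fun t : ℝ => ((Real.sin t : ℝ) : ℂ)) ((Real.cos θ : ℝ) : ℂ) θ :=
      (Real.hasDerivAt_sin θ).ofReal_comp
    have hcosC : HasDerivAt (fun t : ℝ => ((Real.cos t : ℝ) : ℂ)) ((-Real.sin θ : ℝ) : ℂ) θ :=
      (Real.hasDerivAt_cos θ).ofReal_comp
    have hA : HasDerivAt (fun t : ℝ => ((Real.sin t : ℝ) : ℂ) * deriv y t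
        - ((Real.cos t : ℝ) : ℂ) * y t)
        (((Real.cos θ : ℝ) : ℂ) * deriv y θ + ((Real.sin θ : ℝ) : ℂ) * deriv (deriv y) θ
          - (((-Real.sin θ : ℝ) : ℂ) * y θ + ((Real.cos θ : ℝ) : ℂ) * deriv y θ)) θ :=
      (hsinC.mul (hDDy θ hθ)).sub (hcosC.mul (hDy θ hθ))
    have hB : HasDerivAt (fun t : ℝ => (starRingEnd ℂ) (y t))
        ((starRingEnd ℂ) (deriv y θ)) θ := by
      have := (hDy θ hθ).star
      simpa [Complex.star_def] using this
    have hFt : HasDerivAt (fun t : ℝ => (((Real.sin t : ℝ) : ℂ) * deriv y t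
          - ((Real.cos t : ℝ) : ℂ) * y t) * (starRingEnd ℂ) (y t))
        ((((Real.cos θ : ℝ) : ℂ) * deriv y θ + ((Real.sin θ : ℝ) : ℂ) * deriv (deriv y) θ
          - (((-Real.sin θ : ℝ) : ℂ) * y θ + ((Real.cos θ : ℝ) : ℂ) * deriv y θ))
            * (starRingEnd ℂ) (y θ)
          + (((Real.sin θ : ℝ) : ℂ) * deriv y θ - ((Real.cos θ : ℝ) : ℂ) * y θ)
            * (starRingEnd ℂ) (deriv y θ)) θ := hA.mul hB
    have hEq : F =ᶠ[nhds θ] (fun t : ℝ => (((Real.sin t : ℝ) : ℂ) * deriv y t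
        - ((Real.cos t : ℝ) : ℂ) * y t) * (starRingEnd ℂ) (y t)) := by
      filter_upwards [isOpen_Ioo.mem_nhds hθ] with x hx
      rw [hFdef]
      simp only [hy₁eq x hx]
    have hF : HasDerivAt F
        ((((Real.cos θ : ℝ) : ℂ) * deriv y θ + ((Real.sin θ : ℝ) : ℂ) * deriv (deriv y) θ
          - (((-Real.sin θ : ℝ) : ℂ) * y θ + ((Real.cos θ : ℝ) : ℂ) * deriv y θ))
            * (starRingEnd ℂ) (y θ)
          + (((Real.sin θ : ℝ) : ℂ) * deriv y θ - ((Real.cos θ : ℝ) : ℂ) * y θ)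
            * (starRingEnd ℂ) (deriv y θ)) θ := hFt.congr_of_eventuallyEq hEq
    have hpy : ((Real.sin θ : ℝ) : ℂ) ^ 2 + ((Real.cos θ : ℝ) : ℂ) ^ 2 = 1 := by
      rw [← Complex.ofReal_pow, ← Complex.ofReal_pow, ← Complex.ofReal_add,
        Real.sin_sq_add_cos_sq, Complex.ofReal_one]
    have hodeθ := hode θ (hUsub hθ)
    rw [Complex.ofReal_div, Complex.ofReal_neg, Complex.ofReal_pow, Complex.ofReal_div,
      Complex.ofReal_one] at hodeθ
    have hkey := key_alg ((Real.sin θ : ℝ) : ℂ) ((Real.cos θ : ℝ) : ℂ) (μ : ℂ)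
      (y θ) (deriv y θ) (deriv (deriv y) θ) ((starRingEnd ℂ) (y θ))
      ((starRingEnd ℂ) (deriv y θ)) hSne hpy hodeθ
    have hval : (((Real.cos θ : ℝ) : ℂ) * deriv y θ + ((Real.sin θ : ℝ) : ℂ) * deriv (deriv y) θ
          - (((-Real.sin θ : ℝ) : ℂ) * y θ + ((Real.cos θ : ℝ) : ℂ) * deriv y θ))
            * (starRingEnd ℂ) (y θ)
          + (((Real.sin θ : ℝ) : ℂ) * deriv y θ - ((Real.cos θ : ℝ) : ℂ) * y θ)
            * (starRingEnd ℂ) (deriv y θ)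
        = ((Real.sin θ : ℝ) : ℂ) * ((deriv y θ
              - ((Real.cos θ : ℝ) : ℂ) / ((Real.sin θ : ℝ) : ℂ) * y θ)
            * ((starRingEnd ℂ) (deriv y θ)
              - ((Real.cos θ : ℝ) : ℂ) / ((Real.sin θ : ℝ) : ℂ) * (starRingEnd ℂ) (y θ)))
          + ((μ : ℂ) ^ 2 - 3 * Complex.I * (μ : ℂ))
            * (((Real.sin θ : ℝ) : ℂ) * (y θ * (starRingEnd ℂ) (y θ))) := by
      rw [Complex.ofReal_neg]
      linear_combination hkey
    rw [hval] at hF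
    have hre := (Complex.reCLM.hasFDerivAt).comp_hasDerivAt θ hF
    have hZconj : (starRingEnd ℂ) (deriv y θ)
          - ((Real.cos θ : ℝ) : ℂ) / ((Real.sin θ : ℝ) : ℂ) * (starRingEnd ℂ) (y θ)
        = (starRingEnd ℂ) (deriv y θ
            - ((Real.cos θ : ℝ) : ℂ) / ((Real.sin θ : ℝ) : ℂ) * y θ) := by
      rw [map_sub, map_mul, map_div₀, Complex.conj_ofReal, Complex.conj_ofReal]
    have hGval : (((Real.sin θ : ℝ) : ℂ) * ((deriv y θ
              - ((Real.cos θ : ℝ) : ℂ) / ((Real.sin θ : ℝ) : ℂ) * y θ)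
            * ((starRingEnd ℂ) (deriv y θ)
              - ((Real.cos θ : ℝ) : ℂ) / ((Real.sin θ : ℝ) : ℂ) * (starRingEnd ℂ) (y θ)))
          + ((μ : ℂ) ^ 2 - 3 * Complex.I * (μ : ℂ))
            * (((Real.sin θ : ℝ) : ℂ) * (y θ * (starRingEnd ℂ) (y θ)))).re = G θ := by
      rw [hZconj, Complex.mul_conj, Complex.mul_conj, re_helper]
      show _ = Real.sin θ * (Complex.normSq (deriv y θ
        - ((Real.cos θ / Real.sin θ : ℝ) : ℂ) * y θ) + μ ^ 2 * Complex.normSq (y θ))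
      rw [Complex.ofReal_div]
    rw [← hGval]
    exact hre
  -- continuity of f
  have hFc : ContinuousOn F (Set.Icc ω0 ω1) := by
    apply ContinuousOn.mul
    · exact ((Complex.continuous_ofReal.comp Real.continuous_sin).continuousOn.mul hy₁cont).sub
        ((Complex.continuous_ofReal.comp Real.continuous_cos).continuousOn.mul hy.continuousOn)
    · exact Complex.continuous_conj.comp_continuousOn hy.continuousOn
  have hfc : ContinuousOn f (Set.Icc ω0 ω1) := Complex.continuous_re.comp_continuousOn hFc
  have hGnonneg : ∀ θ ∈ Set.Ioo ω0 ω1, 0 ≤ G θ := by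
    intro θ hθ
    have hsθ : 0 < Real.sin θ := hsin θ (hUsub hθ)
    exact mul_nonneg hsθ.le (add_nonneg (Complex.normSq_nonneg _)
      (mul_nonneg (sq_nonneg μ) (Complex.normSq_nonneg _)))
  have hmono : MonotoneOn f (Set.Icc ω0 ω1) := by
    apply monotoneOn_of_deriv_nonneg (convex_Icc ω0 ω1) hfc
    · rw [interior_Icc]
      exact fun θ hθ => ((hF' θ hθ).differentiableAt).differentiableWithinAt
    · rw [interior_Icc]
      intro θ hθ
      rw [(hF' θ hθ).deriv]
      exact hGnonneg θ hθ
  have hf0 : f ω0 = 0 := by simp [hfdef, hFdef, hbc0]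
  have hf1 : f ω1 = 0 := by simp [hfdef, hFdef, hbc1]
  have hfzero : ∀ θ ∈ Set.Icc ω0 ω1, f θ = 0 := by
    intro θ hθ
    have hle : f θ ≤ f ω1 := hmono hθ (Set.right_mem_Icc.2 h01.le) hθ.2
    have hge : f ω0 ≤ f θ := hmono (Set.left_mem_Icc.2 h01.le) hθ hθ.1
    rw [hf0] at hge; rw [hf1] at hle; linarith
  -- y' = cot · y on the interior
  have hZzero : ∀ θ ∈ Set.Ioo ω0 ω1,
      deriv y θ = ((Real.cos θ / Real.sin θ : ℝ) : ℂ) * y θ := by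
    intro θ hθ
    have hzero : HasDerivAt f 0 θ := by
      have hEq : f =ᶠ[nhds θ] fun _ => (0 : ℝ) := by
        filter_upwards [Icc_mem_nhds hθ.1 hθ.2] with x hx
        exact hfzero x hx
      exact (hasDerivAt_const θ (0 : ℝ)).congr_of_eventuallyEq hEq
    have hG0 : G θ = 0 := (hF' θ hθ).unique hzero
    have hsθ : 0 < Real.sin θ := hsin θ (hUsub hθ)
    have hsum : Complex.normSq (deriv y θ - ((Real.cos θ / Real.sin θ : ℝ) : ℂ) * y θ)
        + μ ^ 2 * Complex.normSq (y θ) = 0 := by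
      rcases mul_eq_zero.1 hG0 with h | h
      · exact absurd h hsθ.ne'
      · exact h
    have h3 : Complex.normSq (deriv y θ - ((Real.cos θ / Real.sin θ : ℝ) : ℂ) * y θ) = 0 := by
      have h2 : 0 ≤ μ ^ 2 * Complex.normSq (y θ) :=
        mul_nonneg (sq_nonneg μ) (Complex.normSq_nonneg _)
      have h1 := Complex.normSq_nonneg (deriv y θ - ((Real.cos θ / Real.sin θ : ℝ) : ℂ) * y θ)
      linarith
    have := Complex.normSq_eq_zero.1 h3
    linear_combination this
  -- v = y / sin is constant
  set v : ℝ → ℂ := fun t => y t / ((Real.sin t : ℝ) : ℂ) with hvdef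
  have hv' : ∀ θ ∈ Set.Ioo ω0 ω1, HasDerivAt v 0 θ := by
    intro θ hθ
    have hsθ : 0 < Real.sin θ := hsin θ (hUsub hθ)
    have hSne : ((Real.sin θ : ℝ) : ℂ) ≠ 0 := Complex.ofReal_ne_zero.2 hsθ.ne'
    have hsinC : HasDerivAt (fun t : ℝ => ((Real.sin t : ℝ) : ℂ)) ((Real.cos θ : ℝ) : ℂ) θ :=
      (Real.hasDerivAt_sin θ).ofReal_comp
    have hdiv := (hDy θ hθ).div hsinC hSne
    have hval : (deriv y θ * ((Real.sin θ : ℝ) : ℂ) - y θ * ((Real.cos θ : ℝ) : ℂ))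
        / ((Real.sin θ : ℝ) : ℂ) ^ 2 = 0 := by
      rw [hZzero θ hθ, Complex.ofReal_div, div_eq_zero_iff]
      left
      rw [sub_eq_zero, div_mul_eq_mul_div, div_mul_eq_mul_div, mul_div_assoc,
        div_self hSne, mul_one]
      exact mul_comm _ _
    rw [hval] at hdiv
    exact hdiv
  have hvcont : ContinuousOn v (Set.Icc ω0 ω1) := by
    apply hy.continuousOn.div
      ((Complex.continuous_ofReal.comp Real.continuous_sin).continuousOn)
    exact fun θ hθ => Complex.ofReal_ne_zero.2 (hsin θ hθ).ne'
  -- conclusion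
  intro θ hθ
  rcases eq_or_lt_of_le hθ.1 with h | hlt0
  · rw [← h]; exact hbc0
  rcases eq_or_lt_of_le hθ.2 with h | hlt1
  · rw [h]; exact hbc1
  have hconst := constant_of_has_deriv_right_zero (f := v) (a := θ) (b := ω1)
    (hvcont.mono (Set.Icc_subset_Icc hθ.1 le_rfl))
    (fun x hx => ((hv' x ⟨lt_of_lt_of_le hlt0 hx.1, hx.2⟩).hasDerivWithinAt))
  have hv1 := hconst ω1 (Set.right_mem_Icc.2 hlt1.le)
  have hvθ : v θ = 0 := by
    rw [← hv1, hvdef]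
    simp [hbc1]
  rw [hvdef] at hvθ
  simp only at hvθ
  have hSne : ((Real.sin θ : ℝ) : ℂ) ≠ 0 := Complex.ofReal_ne_zero.2 (hsin θ hθ).ne'
  exact (div_eq_zero_iff.1 hvθ).resolve_right hSne
end

section
/- Let $\gamma>1$, $b>0$, and let $(u,v,\rho)$ be the downstream state behind the self-similar shock: $u=\frac{\tau}{b+\tau}$, $v=\frac{b\tau}{b+\tau}$, $\rho=\frac{b+\tau}{\tau(1-b\tau)}\rho_\infty$, with $\nu=\rho_\infty^{\gamma-1}$ and $\alpha_1\nu^{1/(\gamma-1)}\le\tau\le\alpha_2\nu^{1/(\gamma-1)}$. Define $\alpha = \rho\big(u - \frac{\rho_\infty}{\rho} + (u-1)(1-u^2\rho^{1-\gamma}) - uv^2\rho^{1-\gamma}\big)$ and $\beta = \rho\big(-(u-1)uv\rho^{1-\gamma} + v + v(1-v^2\rho^{1-\gamma})\big)$. Then there exist constants $C_1,C_2>0$ depending only on $\gamma$ and $b$ such that for all sufficiently small $\nu>0$: $|\alpha|\ge C_1$ and $|\beta/\alpha| \le C_2\,\nu^{\frac{1}{\gamma-1}}$. -/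
set_option maxHeartbeats 1000000

private lemma aux_u2 (b τ ε α2 : ℝ) (hb : 0 < b) (hτ : 0 < τ) (hε : 0 < ε)
    (hα2 : 0 < α2) (hτu : τ ≤ α2 * ε) : τ / (b + τ) ≤ α2 / b * ε := by
  rw [div_le_iff₀ (by linarith : (0:ℝ) < b + τ)]
  have h : α2 / b * ε * (b + τ) = (α2 * ε + α2 / b * ε * τ) := by field_simp
  have h2 : 0 ≤ α2 / b * ε * τ := by positivity
  linarith

private lemma aux_v2 (b τ ε α2 : ℝ) (hb : 0 < b) (hτ : 0 < τ) (hε : 0 < ε)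
    (hα2 : 0 < α2) (hτu : τ ≤ α2 * ε) : b * τ / (b + τ) ≤ α2 * ε := by
  rw [div_le_iff₀ (by linarith : (0:ℝ) < b + τ)]
  nlinarith [mul_pos (mul_pos hα2 hε) hτ]

private lemma aux_rho_l (b τ ε α2 : ℝ) (hb : 0 < b) (hτ : 0 < τ) (hε : 0 < ε)
    (hα2 : 0 < α2) (hτu : τ ≤ α2 * ε) (hbτ2 : b * τ ≤ 1 / 2) :
    b ≤ α2 * ((b + τ) / (τ * (1 - b * τ)) * ε) := by
  have hd : 0 < τ * (1 - b * τ) := by nlinarith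
  have h : α2 * ((b + τ) / (τ * (1 - b * τ)) * ε) = α2 * ((b + τ) * ε) / (τ * (1 - b * τ)) := by
    field_simp
  rw [h, le_div_iff₀ hd]
  nlinarith [sq_nonneg (b * τ), mul_le_mul_of_nonneg_left hτu hb.le,
    mul_pos hα2 (mul_pos hτ hε)]

private lemma aux_rho_u (b τ ε α1 : ℝ) (hb : 0 < b) (hτ : 0 < τ) (hε : 0 < ε)
    (hα1 : 0 < α1) (hτl : α1 * ε ≤ τ) (hτb : τ ≤ b) (hbτ2 : b * τ ≤ 1 / 2) :
    α1 * ((b + τ) / (τ * (1 - b * τ)) * ε) ≤ 4 * b := by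
  have hd : 0 < τ * (1 - b * τ) := by nlinarith
  have h : α1 * ((b + τ) / (τ * (1 - b * τ)) * ε) = α1 * ((b + τ) * ε) / (τ * (1 - b * τ)) := by
    field_simp
  rw [h, div_le_iff₀ hd]
  nlinarith [mul_le_mul_of_nonneg_left hτl (by positivity : (0:ℝ) ≤ 2 * b),
    mul_pos (mul_pos hα1 hτ) hε, mul_pos hb hτ, mul_pos (mul_pos hb hτ) (mul_pos hb hτ)]

private lemma aux_erho (b α2 ε ρ : ℝ) (hb : 0 < b) (hα2 : 0 < α2) (hε : 0 < ε)
    (hρ : 0 < ρ) (hl : b ≤ α2 * ρ) : ε / ρ ≤ α2 / b * ε := by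
  rw [div_le_iff₀ hρ]
  have h : α2 / b * ε * ρ = ε * (α2 * ρ) / b := by ring
  rw [h, le_div_iff₀ hb]
  nlinarith

private lemma aux_t3 (u P M c : ℝ) (hu0 : 0 ≤ u) (hu1 : u ≤ 1) (hP : 0 ≤ P)
    (hPM : P ≤ M) (huc : u ≤ c) : u ^ 2 * (1 - u) * P ≤ M * c := by
  have h1 : u ^ 2 * (1 - u) ≤ u := by nlinarith
  have h2 : u ^ 2 * (1 - u) * P ≤ u * P := by nlinarith
  have hc : 0 ≤ c := le_trans hu0 huc
  nlinarith [mul_le_mul huc hPM hP hc]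

private lemma aux_t4 (u v P M c : ℝ) (hu0 : 0 ≤ u) (hu1 : u ≤ 1) (hv0 : 0 ≤ v)
    (hv1 : v ≤ 1) (hP : 0 ≤ P) (hPM : P ≤ M) (huc : u ≤ c) :
    u * v ^ 2 * P ≤ M * c := by
  have hvs : v ^ 2 ≤ 1 := by nlinarith
  have h1 : u * v ^ 2 ≤ u := by nlinarith [mul_le_mul_of_nonneg_left hvs hu0]
  have h2 : u * v ^ 2 * P ≤ u * P := by nlinarith
  have hc : 0 ≤ c := le_trans hu0 huc
  nlinarith [mul_le_mul huc hPM hP hc]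

private lemma aux_B (u v P M : ℝ) (hu0 : 0 ≤ u) (hu1 : u ≤ 1) (hv0 : 0 ≤ v)
    (hv1 : v ≤ 1) (hP : 0 ≤ P) (hPM : P ≤ M) :
    |2 + (1 - u) * u * P - v ^ 2 * P| ≤ 2 + 2 * M := by
  rw [abs_le]
  have h1 : 0 ≤ (1 - u) * u * P := mul_nonneg (mul_nonneg (by linarith) hu0) hP
  have hk : (1 - u) * u ≤ 1 := by nlinarith [sq_nonneg (1 - 2 * u)]
  have h2 : (1 - u) * u * P ≤ M := by nlinarith [mul_le_mul_of_nonneg_right hk hP]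
  have h3 : 0 ≤ v ^ 2 * P := by positivity
  have hvs : v ^ 2 ≤ 1 := by nlinarith
  have h4 : v ^ 2 * P ≤ M := by nlinarith [mul_le_mul_of_nonneg_right hvs hP]
  constructor <;> nlinarith

private lemma aux_C1 (b α2 ρ x : ℝ) (hρ : 0 < ρ) (hα2 : 0 < α2) (h1 : b ≤ α2 * ρ)
    (h2 : 1 / 2 ≤ x) : b ≤ ρ * x * (2 * α2) := by
  nlinarith [mul_pos hρ hα2]

/-- Estimates on the coefficients `(α,β) = ∇₍ᵤ,ᵥ₎G` of the linearized Rankine–Hugoniot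
condition at the background downstream state: there exist `C₁, C₂ > 0` depending only on
`γ, b` such that for all sufficiently small `ν > 0`, `|α| ≥ C₁` and
`|β/α| ≤ C₂ ν^{1/(γ-1)}`. -/
theorem stmt_14 (γ b α1 α2 : ℝ) (hγ : 1 < γ) (hb : 0 < b) (hα1 : 0 < α1) (hα12 : α1 ≤ α2) :
    ∃ C1 > (0 : ℝ), ∃ C2 > (0 : ℝ), ∃ ν0 > (0 : ℝ), ∀ ν ∈ Set.Ioc (0 : ℝ) ν0, ∀ τ : ℝ,
      α1 * ν ^ (1 / (γ - 1)) ≤ τ → τ ≤ α2 * ν ^ (1 / (γ - 1)) →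
      ∀ u v ρ ρinf αc βc : ℝ,
        ρinf = ν ^ (1 / (γ - 1)) →
        u = τ / (b + τ) → v = b * τ / (b + τ) →
        ρ = (b + τ) / (τ * (1 - b * τ)) * ρinf →
        αc = ρ * (u - ρinf / ρ + (u - 1) * (1 - u ^ 2 * ρ ^ (1 - γ))
              - u * v ^ 2 * ρ ^ (1 - γ)) →
        βc = ρ * (-(u - 1) * u * v * ρ ^ (1 - γ) + v + v * (1 - v ^ 2 * ρ ^ (1 - γ))) →
        C1 ≤ |αc| ∧ |βc / αc| ≤ C2 * ν ^ (1 / (γ - 1)) := by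
  have hα2 : 0 < α2 := lt_of_lt_of_le hα1 hα12
  have hg : 0 < γ - 1 := by linarith
  set M : ℝ := (b / α2) ^ (1 - γ) with hMdef
  have hM : 0 < M := Real.rpow_pos_of_pos (by positivity) _
  set K : ℝ := (3 + 2 * M) * (α2 / b) with hKdef
  have hK : 0 < K := by positivity
  clear_value M K
  set δ : ℝ := min (min 1 (1 / α2)) (min (b / α2) (min (1 / (2 * b * α2)) (1 / (2 * K))))
    with hδdef
  have hδ : 0 < δ := by positivity
  have hδ1 : δ ≤ 1 := le_trans (min_le_left _ _) (min_le_left _ _)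
  have hδ2 : δ ≤ 1 / α2 := le_trans (min_le_left _ _) (min_le_right _ _)
  have hδ3 : δ ≤ b / α2 := le_trans (min_le_right _ _) (min_le_left _ _)
  have hδ4 : δ ≤ 1 / (2 * b * α2) :=
    le_trans (min_le_right _ _) (le_trans (min_le_right _ _) (min_le_left _ _))
  have hδ5 : δ ≤ 1 / (2 * K) :=
    le_trans (min_le_right _ _) (le_trans (min_le_right _ _) (min_le_right _ _))
  clear_value δ
  set C1 : ℝ := b / (2 * α2) with hC1def
  set K2 : ℝ := 4 * b / α1 * α2 * (2 + 2 * M) with hK2def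
  have hC1 : 0 < C1 := by rw [hC1def]; positivity
  have hK2 : 0 < K2 := by rw [hK2def]; positivity
  clear_value C1 K2
  refine ⟨C1, hC1, K2 / C1, by positivity, δ ^ (γ - 1), Real.rpow_pos_of_pos hδ _, ?_⟩
  rintro ν ⟨hν, hνν0⟩ τ hτl hτu u v ρ ρinf αc βc hρinf hu hv hρ hαc hβc
  set ε : ℝ := ν ^ (1 / (γ - 1)) with hεdef
  have hε : 0 < ε := Real.rpow_pos_of_pos hν _
  have hεδ : ε ≤ δ := by
    have h1 : ε ≤ (δ ^ (γ - 1)) ^ (1 / (γ - 1)) :=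
      Real.rpow_le_rpow (le_of_lt hν) hνν0 (by positivity)
    have h2 : (δ ^ (γ - 1)) ^ (1 / (γ - 1)) = δ := by
      rw [← Real.rpow_mul hδ.le, mul_one_div, div_self (ne_of_gt hg), Real.rpow_one]
    linarith [h1, h2.le]
  rw [hρinf] at hρ hαc
  clear_value ε
  have hτ : 0 < τ := lt_of_lt_of_le (by positivity) hτl
  have hbτ : 0 < b + τ := by linarith
  have hα2δ : α2 * ε ≤ α2 * δ := mul_le_mul_of_nonneg_left hεδ hα2.le
  -- bounds on b*τ
  have hbτδ : b * τ ≤ 1 / 2 := by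
    have h2 : α2 * δ ≤ α2 * (1 / (2 * b * α2)) := mul_le_mul_of_nonneg_left hδ4 hα2.le
    have h3 : α2 * (1 / (2 * b * α2)) = 1 / (2 * b) := by field_simp
    have h4 : τ ≤ 1 / (2 * b) := by linarith
    have h5 : b * τ ≤ b * (1 / (2 * b)) := mul_le_mul_of_nonneg_left h4 hb.le
    have h6 : b * (1 / (2 * b)) = 1 / 2 := by field_simp
    linarith
  have hbτ0 : 0 ≤ b * τ := by positivity
  have h1bτ : (1:ℝ)/2 ≤ 1 - b * τ := by linarith
  have hτb : τ ≤ b := by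
    have h1 : α2 * δ ≤ α2 * (b / α2) := mul_le_mul_of_nonneg_left hδ3 hα2.le
    have h2 : α2 * (b / α2) = b := by field_simp
    linarith
  -- bounds on u, v
  have hu0 : 0 < u := by rw [hu]; positivity
  have hu1 : u ≤ 1 := by rw [hu, div_le_one hbτ]; linarith
  have hu2 : u ≤ α2 / b * ε := by rw [hu]; exact aux_u2 b τ ε α2 hb hτ hε hα2 hτu
  have hv0 : 0 < v := by rw [hv]; positivity
  have hv2 : v ≤ α2 * ε := by rw [hv]; exact aux_v2 b τ ε α2 hb hτ hε hα2 hτu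
  have hv1 : v ≤ 1 := by
    have h2 : α2 * δ ≤ α2 * (1 / α2) := mul_le_mul_of_nonneg_left hδ2 hα2.le
    have h3 : α2 * (1 / α2) = 1 := by field_simp
    linarith
  -- bounds on ρ
  have hρpos : 0 < ρ := by
    rw [hρ]
    have : 0 < 1 - b * τ := by linarith
    positivity
  have hρl : b ≤ α2 * ρ := by
    rw [hρ]; exact aux_rho_l b τ ε α2 hb hτ hε hα2 hτu hbτδ
  have hρu : α1 * ρ ≤ 4 * b := by
    rw [hρ]; exact aux_rho_u b τ ε α1 hb hτ hε hα1 hτl hτb hbτδ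
  set P : ℝ := ρ ^ (1 - γ) with hPdef
  have hP : 0 < P := Real.rpow_pos_of_pos hρpos _
  have hPM : P ≤ M := by
    rw [hPdef, hMdef]
    apply Real.rpow_le_rpow_of_nonpos (by positivity) _ (by linarith)
    rw [div_le_iff₀ hα2]; linarith [hρl]
  clear_value P
  -- bound ε/ρ
  have hερ : ε / ρ ≤ α2 / b * ε := aux_erho b α2 ε ρ hb hα2 hε hρpos hρl
  have hερ0 : 0 ≤ ε / ρ := by positivity
  -- term bounds
  have ht3 : u ^ 2 * (1 - u) * P ≤ M * (α2 / b * ε) :=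
    aux_t3 u P M _ hu0.le hu1 hP.le hPM hu2
  have ht3' : 0 ≤ u ^ 2 * (1 - u) * P := by
    have : 0 ≤ 1 - u := by linarith
    positivity
  have ht4 : u * v ^ 2 * P ≤ M * (α2 / b * ε) :=
    aux_t4 u v P M _ hu0.le hu1 hv0.le hv1 hP.le hPM hu2
  have ht4' : 0 ≤ u * v ^ 2 * P := by positivity
  have hKε : K * ε ≤ 1 / 2 := by
    have h1 : K * ε ≤ K * δ := mul_le_mul_of_nonneg_left hεδ hK.le
    have h2 : K * δ ≤ K * (1 / (2 * K)) := mul_le_mul_of_nonneg_left hδ5 hK.le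
    have h3 : K * (1 / (2 * K)) = 1 / 2 := by field_simp
    linarith
  -- the quantity A
  set A : ℝ := u - ε / ρ + (u - 1) * (1 - u ^ 2 * P) - u * v ^ 2 * P with hAdef
  have hA1 : A + 1 = 2 * u - ε / ρ + u ^ 2 * (1 - u) * P - u * v ^ 2 * P := by
    rw [hAdef]; ring
  clear_value A
  have hKε' : (3 + 2 * M) * (α2 / b) * ε = 3 * (α2 / b * ε) + 2 * (M * (α2 / b * ε)) := by
    ring
  have hAbd : |A + 1| ≤ K * ε := by
    rw [abs_le, hA1, hKdef, hKε']
    constructor <;> linarith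
  have hAneg : A ≤ -(1 / 2) := by
    rw [abs_le] at hAbd; linarith
  have hAabs : 1 / 2 ≤ |A| := by
    rw [abs_of_nonpos (by linarith)]; linarith
  have hαcabs : |αc| = ρ * |A| := by
    rw [hαc, abs_mul, abs_of_pos hρpos]
  have hC1αc : C1 ≤ |αc| := by
    rw [hαcabs, hC1def, div_le_iff₀ (by positivity : (0:ℝ) < 2 * α2)]
    exact aux_C1 b α2 ρ |A| hρpos hα2 hρl hAabs
  refine ⟨hC1αc, ?_⟩
  -- beta bound
  have hβcB : βc = ρ * v * (2 + (1 - u) * u * P - v ^ 2 * P) := by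
    rw [hβc]; ring
  have hB : |2 + (1 - u) * u * P - v ^ 2 * P| ≤ 2 + 2 * M :=
    aux_B u v P M hu0.le hu1 hv0.le hv1 hP.le hPM
  have hρ4 : ρ ≤ 4 * b / α1 := by
    rw [le_div_iff₀ hα1]; linarith [hρu, mul_comm ρ α1]
  have hβbd : |βc| ≤ K2 * ε := by
    rw [hβcB, abs_mul, abs_mul, abs_of_pos hρpos, abs_of_pos hv0, hK2def]
    have s1 : ρ * v * |2 + (1 - u) * u * P - v ^ 2 * P| ≤ ρ * v * (2 + 2 * M) :=
      mul_le_mul_of_nonneg_left hB (by positivity)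
    have s2 : ρ * v ≤ (4 * b / α1) * (α2 * ε) :=
      mul_le_mul hρ4 hv2 hv0.le (by positivity)
    have s3 : ρ * v * (2 + 2 * M) ≤ (4 * b / α1) * (α2 * ε) * (2 + 2 * M) :=
      mul_le_mul_of_nonneg_right s2 (by positivity)
    have s4 : (4 * b / α1) * (α2 * ε) * (2 + 2 * M) = 4 * b / α1 * α2 * (2 + 2 * M) * ε := by
      ring
    linarith
  have hfin : |βc / αc| ≤ K2 * ε / C1 := by
    rw [abs_div]
    exact div_le_div₀ (by positivity) hβbd hC1 hC1αc
  calc |βc / αc| ≤ K2 * ε / C1 := hfin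
    _ = K2 / C1 * ε := by ring
end

section
/- Let $\mathscr{A}_0,\mathscr{A}_1$ be Banach spaces of functions on $\mathbb{R}$ with norms satisfying $C_1\|u\|_0 \le \big(\sum_{k\in\mathbb{Z}}\|\zeta_k u\|_0^p\big)^{1/p} \le C_2\|u\|_0$ and $\|v\|_1 \ge C_3\big(\sum_{k\in\mathbb{Z}}\|\zeta_k v\|_1^p\big)^{1/p}$ for a fixed smooth partition of unity $\{\zeta_k\}$ subordinate to intervals $((k-1)\delta,(k+1)\delta)$, $p\in[1,\infty)$. Let $\mathscr{P}:\mathscr{A}_1\to\mathscr{A}_0$ be a linear operator defined on compactly supported functions such that for some $\varepsilon>0$ and all integers $m,k$: $\|\zeta_k\mathscr{P}(\zeta_m v)\|_0 \le C\,e^{-|m-k|\varepsilon}\|\zeta_m v\|_1$. Then $\|\mathscr{P}v\|_0 \le C'\|v\|_1$ for all compactly supported $v\in\mathscr{A}_1$, with $C'$ independent of $v$. -/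
set_option maxHeartbeats 1000000

theorem aux_w_summable {ε : ℝ} (hε : 0 < ε) :
    Summable (fun l : ℤ => Real.exp (-((|l| : ℤ) : ℝ) * ε)) := by
  have hw_eq : ∀ l : ℤ, Real.exp (-((|l| : ℤ) : ℝ) * ε) = Real.exp (-ε) ^ l.natAbs := by
    intro l
    rw [← Real.exp_nat_mul]
    congr 1
    simp only [Int.abs_eq_natAbs, Int.cast_natCast]
    ring
  have hr1 : Real.exp (-ε) < 1 := Real.exp_lt_one_iff.mpr (by linarith)
  have hgeo : Summable (fun n : ℕ => Real.exp (-ε) ^ n) :=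
    summable_geometric_of_lt_one (Real.exp_pos _).le hr1
  apply Summable.of_nat_of_neg
  · simp only [hw_eq, Int.natAbs_neg, Int.natAbs_natCast]; exact hgeo
  · simp only [hw_eq, Int.natAbs_neg, Int.natAbs_natCast]; exact hgeo



/-- Maz'ya–Plamenevskiĭ localization lemma: if the norms of `𝒜₀, 𝒜₁` split in `ℓᵖ` over a
partition of unity `{ζₖ}` and the linear operator `𝒫` has exponential off-diagonal decay
`‖ζₖ𝒫(ζₘv)‖₀ ≤ C e^{-|m-k|ε}‖ζₘv‖₁`, then `‖𝒫v‖₀ ≤ C'‖v‖₁` for all compactly supported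
`v` (modeled as: the family `(ζₖ v)` has finite support and sums to `v`). -/
theorem stmt_15 {A0 A1 : Type*}
    [NormedAddCommGroup A0] [NormedSpace ℝ A0]
    [NormedAddCommGroup A1] [NormedSpace ℝ A1]
    (p : ℝ) (hp : 1 ≤ p)
    (Z0 : ℤ → A0 →ₗ[ℝ] A0) (Z1 : ℤ → A1 →ₗ[ℝ] A1)
    (C1 C2 C3 C ε : ℝ) (hC1 : 0 < C1) (hC2 : 0 < C2) (hC3 : 0 < C3) (hC : 0 < C)
    (hε : 0 < ε)
    (hA0lo : ∀ u : A0, C1 * ‖u‖ ≤ (∑' k : ℤ, ‖Z0 k u‖ ^ p) ^ (1 / p))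
    (hA0hi : ∀ u : A0, (∑' k : ℤ, ‖Z0 k u‖ ^ p) ^ (1 / p) ≤ C2 * ‖u‖)
    (hA1lo : ∀ v : A1, C3 * (∑' k : ℤ, ‖Z1 k v‖ ^ p) ^ (1 / p) ≤ ‖v‖)
    (P : A1 →ₗ[ℝ] A0)
    (hdecay : ∀ (k m : ℤ) (v : A1),
      ‖Z0 k (P (Z1 m v))‖ ≤ C * Real.exp (-((|m - k| : ℤ) : ℝ) * ε) * ‖Z1 m v‖)
    (hpart : ∀ v : A1, {k : ℤ | Z1 k v ≠ 0}.Finite → ∑ᶠ k : ℤ, Z1 k v = v) :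
    ∃ C' > (0 : ℝ), ∀ v : A1, {k : ℤ | Z1 k v ≠ 0}.Finite → ‖P v‖ ≤ C' * ‖v‖ := by
  classical
  have hp0 : (0 : ℝ) < p := lt_of_lt_of_le one_pos hp
  -- the convolution kernel
  set w : ℤ → ℝ := fun l => Real.exp (-((|l| : ℤ) : ℝ) * ε) with hw_def
  have hw_pos : ∀ l, 0 < w l := fun l => Real.exp_pos _
  have hw_sum : Summable w := aux_w_summable hε
  set S : ℝ := ∑' l : ℤ, w l with hS_def
  have hS_pos : 0 < S := by
    have h0 : w 0 ≤ S := Summable.le_tsum hw_sum 0 (fun l _ => (hw_pos l).le)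
    have : (0 : ℝ) < w 0 := hw_pos 0
    linarith
  have hwk_sum : ∀ k : ℤ, Summable (fun m : ℤ => w (m - k)) := by
    intro k
    exact (Equiv.subRight k).summable_iff.mpr hw_sum
  have hwk_tsum : ∀ k : ℤ, (∑' m : ℤ, w (m - k)) = S := by
    intro k
    exact (Equiv.subRight k).tsum_eq w
  have hwm_sum : ∀ m : ℤ, Summable (fun k : ℤ => w (m - k)) := by
    intro m
    exact (Equiv.subLeft m).summable_iff.mpr hw_sum
  have hwm_tsum : ∀ m : ℤ, (∑' k : ℤ, w (m - k)) = S := by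
    intro m
    exact (Equiv.subLeft m).tsum_eq w
  refine ⟨C * S / (C1 * C3), by positivity, ?_⟩
  intro v hv
  set F : Finset ℤ := hv.toFinset with hF_def
  have hvF : ∀ m : ℤ, m ∉ F → Z1 m v = 0 := by
    intro m hm
    by_contra h
    exact hm (hv.mem_toFinset.mpr h)
  have hv_sum : v = ∑ m ∈ F, Z1 m v :=
    ((hpart v hv).symm.trans (finsum_eq_sum (fun k => Z1 k v) hv))
  set b : ℤ → ℝ := fun m => ‖Z1 m v‖ with hb_def
  have hb_nonneg : ∀ m, 0 ≤ b m := fun m => norm_nonneg _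
  by_cases hFne : F.Nonempty
  · -- main estimate on each localized piece
    have hPv : P v = ∑ m ∈ F, P (Z1 m v) := by
      conv_lhs => rw [hv_sum]
      exact map_sum P _ _
    set a : ℤ → ℝ := fun k => ‖Z0 k (P v)‖ with ha_def
    have ha_le : ∀ k : ℤ, a k ≤ C * ∑ m ∈ F, w (m - k) * b m := by
      intro k
      have h1 : Z0 k (P v) = ∑ m ∈ F, Z0 k (P (Z1 m v)) := by
        rw [hPv, map_sum]
      calc a k = ‖∑ m ∈ F, Z0 k (P (Z1 m v))‖ := by show ‖Z0 k (P v)‖ = _; rw [h1]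
        _ ≤ ∑ m ∈ F, ‖Z0 k (P (Z1 m v))‖ := norm_sum_le _ _
        _ ≤ ∑ m ∈ F, C * w (m - k) * b m := by
            apply Finset.sum_le_sum
            intro m _
            exact hdecay k m v
        _ = C * ∑ m ∈ F, w (m - k) * b m := by
            rw [Finset.mul_sum]; apply Finset.sum_congr rfl; intro m _; ring
    -- total weights
    set T : ℤ → ℝ := fun k => ∑ m ∈ F, w (m - k) with hT_def
    have hT_pos : ∀ k, 0 < T k :=
      fun k => Finset.sum_pos (fun m _ => hw_pos _) hFne
    have hT_le : ∀ k, T k ≤ S := by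
      intro k
      rw [← hwk_tsum k]
      exact Summable.sum_le_tsum F (fun m _ => (hw_pos _).le) (hwk_sum k)
    -- Jensen/Hölder step
    have hjensen : ∀ k : ℤ, (∑ m ∈ F, w (m - k) * b m) ^ p
        ≤ S ^ (p - 1) * ∑ m ∈ F, w (m - k) * b m ^ p := by
      intro k
      have hmean := Real.rpow_arith_mean_le_arith_mean_rpow F
        (fun m => w (m - k) / T k) b
        (fun m _ => div_nonneg (hw_pos _).le (hT_pos k).le)
        (by rw [← Finset.sum_div]; exact div_self (hT_pos k).ne')
        (fun m _ => hb_nonneg m) hp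
      have hL : ∑ m ∈ F, w (m - k) / T k * b m = (∑ m ∈ F, w (m - k) * b m) / T k := by
        rw [Finset.sum_div]; apply Finset.sum_congr rfl; intro m _; ring
      have hR : ∑ m ∈ F, w (m - k) / T k * b m ^ p
          = (∑ m ∈ F, w (m - k) * b m ^ p) / T k := by
        rw [Finset.sum_div]; apply Finset.sum_congr rfl; intro m _; ring
      rw [hL, hR] at hmean
      have hnum : 0 ≤ ∑ m ∈ F, w (m - k) * b m :=
        Finset.sum_nonneg fun m _ => mul_nonneg (hw_pos _).le (hb_nonneg m)
      rw [Real.div_rpow hnum (hT_pos k).le] at hmean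
      have h2 : (∑ m ∈ F, w (m - k) * b m) ^ p
          ≤ T k ^ p * ((∑ m ∈ F, w (m - k) * b m ^ p) / T k) := by
        rw [div_le_iff₀ (Real.rpow_pos_of_pos (hT_pos k) p)] at hmean
        calc (∑ m ∈ F, w (m - k) * b m) ^ p
            ≤ (∑ m ∈ F, w (m - k) * b m ^ p) / T k * T k ^ p := hmean
          _ = T k ^ p * ((∑ m ∈ F, w (m - k) * b m ^ p) / T k) := by ring
      have h3 : T k ^ p * ((∑ m ∈ F, w (m - k) * b m ^ p) / T k)
          = T k ^ (p - 1) * ∑ m ∈ F, w (m - k) * b m ^ p := by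
        rw [Real.rpow_sub (hT_pos k), Real.rpow_one]
        field_simp
      rw [h3] at h2
      refine h2.trans ?_
      apply mul_le_mul_of_nonneg_right
      · exact Real.rpow_le_rpow (hT_pos k).le (hT_le k) (by linarith)
      · exact Finset.sum_nonneg fun m _ => mul_nonneg (hw_pos _).le
          (Real.rpow_nonneg (hb_nonneg m) p)
    -- the dominating summable function
    set g : ℤ → ℝ := fun k => C ^ p * (S ^ (p - 1) * ∑ m ∈ F, w (m - k) * b m ^ p)
      with hg_def
    have hag : ∀ k, a k ^ p ≤ g k := by
      intro k
      have h1 : a k ^ p ≤ (C * ∑ m ∈ F, w (m - k) * b m) ^ p :=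
        Real.rpow_le_rpow (norm_nonneg _) (ha_le k) hp0.le
      have hnum : 0 ≤ ∑ m ∈ F, w (m - k) * b m :=
        Finset.sum_nonneg fun m _ => mul_nonneg (hw_pos _).le (hb_nonneg m)
      rw [Real.mul_rpow hC.le hnum] at h1
      refine h1.trans ?_
      exact mul_le_mul_of_nonneg_left (hjensen k) (Real.rpow_nonneg hC.le p)
    have hg_sum : Summable g := by
      rw [hg_def]
      exact ((summable_sum (fun m _ => (hwm_sum m).mul_right (b m ^ p))).mul_left _).mul_left _
    have hg_tsum : (∑' k : ℤ, g k) = C ^ p * S ^ p * ∑ m ∈ F, b m ^ p := by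
      have hswap : (∑' k : ℤ, ∑ m ∈ F, w (m - k) * b m ^ p)
          = ∑ m ∈ F, ∑' k : ℤ, w (m - k) * b m ^ p :=
        Summable.tsum_finsetSum fun m _ => (hwm_sum m).mul_right (b m ^ p)
      have hinner : ∀ m : ℤ, (∑' k : ℤ, w (m - k) * b m ^ p) = S * b m ^ p := by
        intro m
        rw [tsum_mul_right, hwm_tsum m, mul_comm]
      calc (∑' k : ℤ, g k)
          = C ^ p * (S ^ (p - 1) * ∑' k : ℤ, ∑ m ∈ F, w (m - k) * b m ^ p) := by
            rw [hg_def]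
            rw [tsum_mul_left, tsum_mul_left]
        _ = C ^ p * (S ^ (p - 1) * ∑ m ∈ F, S * b m ^ p) := by
            rw [hswap]
            congr 1
            congr 1
            exact Finset.sum_congr rfl fun m _ => hinner m
        _ = C ^ p * S ^ p * ∑ m ∈ F, b m ^ p := by
            rw [← Finset.mul_sum]
            have : S ^ (p - 1) * S = S ^ p := by
              rw [Real.rpow_sub hS_pos, Real.rpow_one]
              field_simp
            rw [← mul_assoc, ← mul_assoc, mul_assoc (C ^ p), this]
    have ha_sum : Summable (fun k : ℤ => a k ^ p) :=
      Summable.of_nonneg_of_le (fun k => Real.rpow_nonneg (norm_nonneg _) p) hag hg_sum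
    have htsum_le : (∑' k : ℤ, a k ^ p) ≤ C ^ p * S ^ p * ∑ m ∈ F, b m ^ p := by
      rw [← hg_tsum]
      exact Summable.tsum_le_tsum hag ha_sum hg_sum
    -- assemble
    have hbF : (∑' m : ℤ, b m ^ p) = ∑ m ∈ F, b m ^ p := by
      apply tsum_eq_sum
      intro m hm
      rw [hb_def]
      simp only
      rw [hvF m hm, norm_zero, Real.zero_rpow hp0.ne']
    have hbv : (∑ m ∈ F, b m ^ p) ^ (1 / p) ≤ ‖v‖ / C3 := by
      rw [← hbF]
      rw [le_div_iff₀ hC3, mul_comm]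
      exact hA1lo v
    have hbF_nonneg : 0 ≤ ∑ m ∈ F, b m ^ p :=
      Finset.sum_nonneg fun m _ => Real.rpow_nonneg (hb_nonneg m) p
    have key : C1 * ‖P v‖ ≤ C * S * (‖v‖ / C3) := by
      calc C1 * ‖P v‖ ≤ (∑' k : ℤ, ‖Z0 k (P v)‖ ^ p) ^ (1 / p) := hA0lo (P v)
        _ ≤ (C ^ p * S ^ p * ∑ m ∈ F, b m ^ p) ^ (1 / p) := by
            apply Real.rpow_le_rpow _ htsum_le (by positivity)
            exact tsum_nonneg fun k => Real.rpow_nonneg (norm_nonneg _) p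
        _ = C * S * (∑ m ∈ F, b m ^ p) ^ (1 / p) := by
            rw [Real.mul_rpow (by positivity) hbF_nonneg,
              Real.mul_rpow (by positivity) (by positivity),
              ← Real.rpow_mul hC.le, ← Real.rpow_mul hS_pos.le,
              mul_one_div_cancel hp0.ne', Real.rpow_one, Real.rpow_one]
        _ ≤ C * S * (‖v‖ / C3) := by
            apply mul_le_mul_of_nonneg_left hbv (by positivity)
    rw [div_mul_eq_mul_div, le_div_iff₀ (mul_pos hC1 hC3)]
    have h4 := mul_le_mul_of_nonneg_left key hC3.le
    have h5 : C3 * (C * S * (‖v‖ / C3)) = C * S * ‖v‖ := by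
      field_simp
    have h6 : ‖P v‖ * (C1 * C3) = C3 * (C1 * ‖P v‖) := by ring
    linarith
  · -- degenerate case: v = 0
    have hv0 : v = 0 := by
      rw [hv_sum, Finset.not_nonempty_iff_eq_empty.mp hFne, Finset.sum_empty]
    rw [hv0]
    simp
end
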